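/- (Blahut–Arimoto convergence rate for multipartite common information.) Let W be a broadcast channel from finite X to Y₁ × ⋯ × Y_K, and define C̃(W) := max_{p ∈ P(X)} I(X : Y₁ : ⋯ : Y_K)_{p·W} where I(X:Y₁:⋯:Y_K) := D(p_{XY₁⋯Y_K} ‖ p_X × p_{Y₁} × ⋯ × p_{Y_K}). Starting from the uniform distribution p^{(0)} on X and using the update p^{(t)}(x) ∝ p^{(t−1)}(x)·exp(D(W(·|x) ‖ p^{(t−1)}_{Y₁} × ⋯ × p^{(t−1)}_{Y_K}) / K), the estimate C̃(n) after n iterations satisfies |C̃(W) − C̃(n)| ≤ K log|X| / n. -/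

import Mathlib

open scoped BigOperators

noncomputable section

/-- A probability mass function on a finite type. -/
def IsPMF {α : Type*} [Fintype α] (p : α → ℝ) : Prop :=
  (∀ a, 0 ≤ p a) ∧ ∑ a, p a = 1

/-- Max-relative entropy (base 2). -/
noncomputable def Dmax {α : Type*} [Fintype α] [Nonempty α] (p q : α → ℝ) : ℝ :=
  Real.logb 2 (⨆ a, p a / q a)

open Classical in
/-- Information spectrum divergence `D_{s+}^ε(p‖q)`. -/
noncomputable def Ds {α : Type*} [Fintype α] (ε : ℝ) (p q : α → ℝ) : ℝ :=
  sInf {a : ℝ | 0 ≤ a ∧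
    (∑ w, if a < Real.logb 2 (p w / q w) then p w else 0) ≤ ε}

/-- Total variation distance. -/
noncomputable def TV {α : Type*} [Fintype α] (p q : α → ℝ) : ℝ :=
  (∑ a, |p a - q a|) / 2

/-- Kullback–Leibler divergence (base 2). -/
noncomputable def KL {α : Type*} [Fintype α] (p q : α → ℝ) : ℝ :=
  ∑ a, p a * Real.logb 2 (p a / q a)


/-- Natural-log Kullback–Leibler divergence (auxiliary). -/
noncomputable def klnat {α : Type*} [Fintype α] (p q : α → ℝ) : ℝ :=
  ∑ a, p a * Real.log (p a / q a)

lemma KL_eq_klnat {α : Type*} [Fintype α] (p q : α → ℝ) :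
    KL p q = klnat p q / Real.log 2 := by
  simp only [KL, klnat, Real.logb, Finset.sum_div, mul_div_assoc]

lemma klnat_nonneg {α : Type*} [Fintype α] {p q : α → ℝ} (hp : ∀ a, 0 ≤ p a)
    (hq : ∀ a, 0 ≤ q a) (hsupp : ∀ a, q a = 0 → p a = 0)
    (hsum : ∑ a, q a ≤ ∑ a, p a) : 0 ≤ klnat p q := by
  have key : ∀ a, p a - q a ≤ p a * Real.log (p a / q a) := by
    intro a
    rcases (hp a).eq_or_lt with h | h
    · rw [← h]; simpa using hq a
    · have hqa : 0 < q a :=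
        lt_of_le_of_ne (hq a) (fun h0 => by have := hsupp a h0.symm; linarith)
      have h1 : Real.log (q a / p a) ≤ q a / p a - 1 :=
        Real.log_le_sub_one_of_pos (by positivity)
      have h2 : Real.log (p a / q a) = - Real.log (q a / p a) := by
        rw [← Real.log_inv, inv_div]
      have h3 : p a * (q a / p a) = q a := by field_simp
      nlinarith
  have h4 : ∑ a, (p a - q a) ≤ klnat p q := Finset.sum_le_sum fun a _ => key a
  have h5 : (0:ℝ) ≤ ∑ a, (p a - q a) := by rw [Finset.sum_sub_distrib]; linarith
  linarith

lemma jensen_log {α : Type*} [Fintype α] (w g : α → ℝ) (hw : ∀ a, 0 ≤ w a)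
    (hw1 : ∑ a, w a = 1) (hg : ∀ a, 0 < g a) :
    ∑ a, w a * Real.log (g a) ≤ Real.log (∑ a, w a * g a) := by
  have := strictConcaveOn_log_Ioi.concaveOn.le_map_sum
    (t := Finset.univ) (w := w) (p := g) (fun a _ => hw a) hw1 (fun a _ => hg a)
  simpa [smul_eq_mul] using this
lemma klnat_dpi {α β : Type*} [Fintype α] [Fintype β] (p q : α → ℝ) (ch : α → β → ℝ)
    (hp : ∀ a, 0 < p a) (hq : ∀ a, 0 < q a)
    (hch : ∀ a b, 0 ≤ ch a b) (hch1 : ∀ a, ∑ b, ch a b = 1) :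
    klnat (fun b => ∑ a, p a * ch a b) (fun b => ∑ a, q a * ch a b) ≤ klnat p q := by
  set p' : β → ℝ := fun b => ∑ a, p a * ch a b with hp'
  set q' : β → ℝ := fun b => ∑ a, q a * ch a b with hq'
  have hps : ∀ b, 0 ≤ p' b := fun b =>
    Finset.sum_nonneg fun a _ => mul_nonneg (hp a).le (hch a b)
  have hqs : ∀ b, 0 ≤ q' b := fun b =>
    Finset.sum_nonneg fun a _ => mul_nonneg (hq a).le (hch a b)
  have hq0 : ∀ b, q' b = 0 → ∀ a, ch a b = 0 := by
    intro b hb a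
    have := (Finset.sum_eq_zero_iff_of_nonneg
      (fun a _ => mul_nonneg (hq a).le (hch a b))).1 hb a (Finset.mem_univ a)
    rcases mul_eq_zero.1 this with h | h
    · exact absurd h (ne_of_gt (hq a))
    · exact h
  have hple : ∀ a b, p a * ch a b ≤ p' b := by
    intro a b
    exact Finset.single_le_sum (f := fun a => p a * ch a b)
      (fun a _ => mul_nonneg (hp a).le (hch a b)) (Finset.mem_univ a)
  have hqle : ∀ a b, q a * ch a b ≤ q' b := by
    intro a b
    exact Finset.single_le_sum (f := fun a => q a * ch a b)
      (fun a _ => mul_nonneg (hq a).le (hch a b)) (Finset.mem_univ a)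
  set P : α × β → ℝ := fun z => p z.1 * ch z.1 z.2 with hP
  set Q : α × β → ℝ := fun z => q z.1 * ch z.1 z.2 * (p' z.2 / q' z.2) with hQ
  -- Gibbs for P, Q
  have hPn : ∀ z, 0 ≤ P z := fun z => mul_nonneg (hp z.1).le (hch z.1 z.2)
  have hQn : ∀ z, 0 ≤ Q z := fun z =>
    mul_nonneg (mul_nonneg (hq z.1).le (hch z.1 z.2)) (div_nonneg (hps z.2) (hqs z.2))
  have hQsupp : ∀ z, Q z = 0 → P z = 0 := by
    rintro ⟨a, b⟩ hz
    simp only [hQ, hP] at hz ⊢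
    rcases mul_eq_zero.1 hz with h | h
    · rcases mul_eq_zero.1 h with h' | h'
      · exact absurd h' (ne_of_gt (hq a))
      · rw [h', mul_zero]
    · rcases div_eq_zero_iff.1 h with h' | h'
      · -- p' b = 0 hence p a * ch a b = 0
        have := hple a b
        rw [h'] at this
        exact le_antisymm this (hPn (a, b))
      · -- q' b = 0 hence ch a b = 0
        rw [hq0 b h' a, mul_zero]
  have hsumPQ : ∑ z, Q z ≤ ∑ z, P z := by
    have hPsum : ∑ z, P z = ∑ a, p a := by
      rw [Fintype.sum_prod_type]
      simp only [hP]
      refine Finset.sum_congr rfl fun a _ => ?_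
      rw [← Finset.mul_sum, hch1 a, mul_one]
    have hQsum : ∑ z, Q z ≤ ∑ b, p' b := by
      rw [Fintype.sum_prod_type_right]
      refine Finset.sum_le_sum fun b _ => ?_
      have : ∑ a, Q (a, b) = q' b * (p' b / q' b) := by
        simp only [hQ, hq']
        rw [Finset.sum_mul]
      rw [this]
      rcases eq_or_lt_of_le (hqs b) with h | h
      · rw [← h, zero_mul]; exact hps b
      · rw [mul_div_cancel₀ _ (ne_of_gt h)]
    have hp'sum : ∑ b, p' b = ∑ a, p a := by
      rw [hp']
      rw [Finset.sum_comm]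
      refine Finset.sum_congr rfl fun a _ => ?_
      rw [← Finset.mul_sum, hch1 a, mul_one]
    calc ∑ z, Q z ≤ ∑ b, p' b := hQsum
      _ = ∑ a, p a := hp'sum
      _ = ∑ z, P z := hPsum.symm
  have hgibbs : 0 ≤ klnat P Q := klnat_nonneg hPn hQn hQsupp hsumPQ
  -- identity: klnat P Q = klnat p q - klnat p' q'
  have hiden : klnat P Q = klnat p q - klnat p' q' := by
    have hterm : ∀ z : α × β, P z * Real.log (P z / Q z) =
        p z.1 * ch z.1 z.2 * Real.log (p z.1 / q z.1)
        - p z.1 * ch z.1 z.2 * Real.log (p' z.2 / q' z.2) := by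
      rintro ⟨a, b⟩
      rcases eq_or_lt_of_le (hch a b) with h | h
      · simp [hP, hQ, ← h]
      · have hpa := hp a
        have hqa := hq a
        have hpb : 0 < p' b := lt_of_lt_of_le (mul_pos hpa h) (hple a b)
        have hqb : 0 < q' b := lt_of_lt_of_le (mul_pos hqa h) (hqle a b)
        have hQpos : 0 < Q (a, b) := by
          simp only [hQ]
          positivity
        have hPpos : 0 < P (a, b) := mul_pos hpa h
        simp only [hP, hQ]
        rw [Real.log_div (ne_of_gt hPpos) (ne_of_gt hQpos),
          Real.log_mul (ne_of_gt hpa) (ne_of_gt h),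
          Real.log_mul (ne_of_gt (mul_pos hqa h)) (ne_of_gt (div_pos hpb hqb)),
          Real.log_mul (ne_of_gt hqa) (ne_of_gt h),
          Real.log_div (ne_of_gt hpb) (ne_of_gt hqb),
          Real.log_div (ne_of_gt hpa) (ne_of_gt hqa)]
        ring
    have h1 : klnat P Q = ∑ z : α × β, (p z.1 * ch z.1 z.2 * Real.log (p z.1 / q z.1)
        - p z.1 * ch z.1 z.2 * Real.log (p' z.2 / q' z.2)) := by
      unfold klnat
      exact Finset.sum_congr rfl fun z _ => hterm z
    rw [h1, Finset.sum_sub_distrib]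
    congr 1
    · rw [Fintype.sum_prod_type]
      unfold klnat
      refine Finset.sum_congr rfl fun a _ => ?_
      have he : ∀ y : β, p (a, y).1 * ch (a, y).1 (a, y).2 * Real.log (p (a, y).1 / q (a, y).1)
          = ch a y * (p a * Real.log (p a / q a)) := fun y => by ring
      rw [Finset.sum_congr rfl fun y _ => he y, ← Finset.sum_mul, hch1 a, one_mul]
    · rw [Fintype.sum_prod_type_right]
      unfold klnat
      refine Finset.sum_congr rfl fun b _ => ?_
      have he : ∀ x : α, p (x, b).1 * ch (x, b).1 (x, b).2 * Real.log (p' (x, b).2 / q' (x, b).2)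
          = (p x * ch x b) * Real.log (p' b / q' b) := fun x => by ring
      rw [Finset.sum_congr rfl fun x _ => he x, ← Finset.sum_mul]
  linarith

open Classical in
/-- Blahut–Arimoto convergence rate for the multipartite common information:
starting from the uniform input distribution and using the update
`p^{(t)}(x) ∝ p^{(t-1)}(x)·2^{D(W(·|x) ‖ ∏ᵢ p^{(t-1)}_{Y_i})/K}`, the
estimate after `n` iterations is within `K log|X| / n` of
`C̃(W) = max_p I(X:Y₁:⋯:Y_K)`. -/
theorem blahut_arimoto_convergence
    {K : ℕ} (hK : 0 < K) {X : Type*} (Y : Fin K → Type*)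
    [Fintype X] [Nonempty X] [∀ i, Fintype (Y i)] [∀ i, DecidableEq (Y i)]
    (W : X → (∀ i, Y i) → ℝ) (hW : ∀ x, IsPMF (W x))
    -- the `i`-th output marginal induced by an input distribution `p`
    (marg : (X → ℝ) → ∀ i, Y i → ℝ)
    (hmarg : ∀ (p : X → ℝ) i (yi : Y i),
      marg p i yi = ∑ x, p x * ∑ y : ∀ j, Y j, if y i = yi then W x y else 0)
    -- the multipartite mutual information `I(X:Y₁:⋯:Y_K)` under input `p`
    (I : (X → ℝ) → ℝ)
    (hI : ∀ p : X → ℝ,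
      I p = KL (fun z : X × (∀ i, Y i) => p z.1 * W z.1 z.2)
              (fun z => p z.1 * ∏ i, marg p i (z.2 i)))
    -- the multipartite common information `C̃(W)`
    (Ctilde : ℝ)
    (hC : Ctilde = sSup {c : ℝ | ∃ p : X → ℝ, IsPMF p ∧ c = I p})
    -- the Blahut–Arimoto iterates
    (pseq : ℕ → X → ℝ)
    (h0 : ∀ x, pseq 0 x = 1 / (Fintype.card X : ℝ))
    (hrec : ∀ t x, pseq (t + 1) x =
      pseq t x * (2:ℝ) ^ (KL (W x) (fun y => ∏ i, marg (pseq t) i (y i)) / K) /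
        ∑ x', pseq t x' *
          (2:ℝ) ^ (KL (W x') (fun y => ∏ i, marg (pseq t) i (y i)) / K)) :
    ∀ n : ℕ, 0 < n →
      |Ctilde - I (pseq n)| ≤ K * Real.logb 2 (Fintype.card X) / n := by
  classical
  intro n hn
  have hc2 : (0:ℝ) < Real.log 2 := Real.log_pos one_lt_two
  have hKR : (0:ℝ) < (K:ℝ) := by exact_mod_cast hK
  have hcard : (0:ℝ) < (Fintype.card X : ℝ) := by exact_mod_cast Fintype.card_pos
  have hnR : (0:ℝ) < (n:ℝ) := by exact_mod_cast hn
  -- per-coordinate channels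
  set Wi : X → ∀ i, Y i → ℝ :=
    fun x i yi => ∑ y : ∀ j, Y j, if y i = yi then W x y else 0 with hWidef
  have hmarg' : ∀ (p : X → ℝ) i yi, marg p i yi = ∑ x, p x * Wi x i yi :=
    fun p i yi => hmarg p i yi
  have hWin : ∀ x i yi, 0 ≤ Wi x i yi := by
    intro x i yi
    refine Finset.sum_nonneg fun y _ => ?_
    by_cases h : y i = yi <;> simp [h, (hW x).1 y]
  have hWis : ∀ x i, ∑ yi, Wi x i yi = 1 := by
    intro x i
    rw [hWidef, Finset.sum_comm]
    simp only [Finset.sum_ite_eq, Finset.mem_univ, if_true]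
    exact (hW x).2
  have hWge : ∀ x y i, W x y ≤ Wi x i (y i) := by
    intro x y i
    have h := Finset.single_le_sum
      (f := fun y' => if y' i = y i then W x y' else 0)
      (fun y' _ => by by_cases h : y' i = y i <;> simp [h, (hW x).1 y'])
      (Finset.mem_univ y)
    simpa using h
  -- marginal basic facts
  have hmargn : ∀ (p : X → ℝ), (∀ x, 0 ≤ p x) → ∀ i yi, 0 ≤ marg p i yi := by
    intro p hp i yi
    rw [hmarg']
    exact Finset.sum_nonneg fun x _ => mul_nonneg (hp x) (hWin x i yi)
  have hmargpos : ∀ (p : X → ℝ), (∀ x, 0 ≤ p x) → ∀ x y, 0 < p x → 0 < W x y →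
      ∀ i, 0 < marg p i (y i) := by
    intro p hp x y hx hw i
    have h1 : p x * W x y ≤ p x * Wi x i (y i) :=
      mul_le_mul_of_nonneg_left (hWge x y i) (hp x)
    have h2 : p x * Wi x i (y i) ≤ marg p i (y i) := by
      rw [hmarg']
      exact Finset.single_le_sum
        (f := fun x' => p x' * Wi x' i (y i))
        (fun x' _ => mul_nonneg (hp x') (hWin x' i (y i))) (Finset.mem_univ x)
    calc (0:ℝ) < p x * W x y := mul_pos hx hw
      _ ≤ marg p i (y i) := h1.trans h2
  -- grouping lemma
  have hmarg_g : ∀ (p : X → ℝ) (i : Fin K) (g : Y i → ℝ),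
      ∑ yi, marg p i yi * g yi = ∑ x, p x * ∑ y, W x y * g (y i) := by
    intro p i g
    have inner : ∀ x, ∑ yi, Wi x i yi * g yi = ∑ y, W x y * g (y i) := by
      intro x
      have h1 : ∀ yi, Wi x i yi * g yi
          = ∑ y, if y i = yi then W x y * g yi else 0 := by
        intro yi
        rw [hWidef, Finset.sum_mul]
        exact Finset.sum_congr rfl fun y _ => by
          by_cases h : y i = yi <;> simp [h]
      rw [Finset.sum_congr rfl fun yi _ => h1 yi, Finset.sum_comm]
      refine Finset.sum_congr rfl fun y _ => ?_
      simp [Finset.sum_ite_eq]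
    calc ∑ yi, marg p i yi * g yi
        = ∑ yi, ∑ x, p x * Wi x i yi * g yi := by
          refine Finset.sum_congr rfl fun yi _ => ?_
          rw [hmarg', Finset.sum_mul]
      _ = ∑ x, ∑ yi, p x * Wi x i yi * g yi := Finset.sum_comm
      _ = ∑ x, p x * ∑ y, W x y * g (y i) := by
          refine Finset.sum_congr rfl fun x _ => ?_
          rw [← inner x, Finset.mul_sum]
          exact Finset.sum_congr rfl fun yi _ => by ring
  have hmargsum : ∀ (p : X → ℝ), ∑ x, p x = 1 → ∀ i, ∑ yi, marg p i yi = 1 := by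
    intro p hp i
    have h := hmarg_g p i (fun _ => 1)
    simp only [mul_one] at h
    rw [h]
    rw [Finset.sum_congr rfl fun x _ => by rw [(hW x).2, mul_one]]
    exact hp
  -- product output distribution
  set Rp : (X → ℝ) → (∀ i, Y i) → ℝ := fun p y => ∏ i, marg p i (y i) with hRpdef
  have hRppos : ∀ (p : X → ℝ), (∀ x, 0 ≤ p x) → ∀ x y, 0 < p x → 0 < W x y →
      0 < Rp p y := by
    intro p hp x y hx hw
    exact Finset.prod_pos fun i _ => hmargpos p hp x y hx hw i
  -- the BA multiplier and normalizer
  set E : ℕ → X → ℝ := fun t x =>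
    (2:ℝ) ^ (KL (W x) (fun y => ∏ i, marg (pseq t) i (y i)) / K) with hEdef
  set Zt : ℕ → ℝ := fun t => ∑ x, pseq t x * E t x with hZdef
  have hrec' : ∀ t x, pseq (t + 1) x = pseq t x * E t x / Zt t := hrec
  have hEpos : ∀ t x, 0 < E t x := fun t x => Real.rpow_pos_of_pos two_pos _
  have hppos : ∀ t x, 0 < pseq t x := by
    intro t
    induction t with
    | zero =>
        intro x
        rw [h0 x]
        positivity
    | succ t ih =>
        intro x
        rw [hrec' t x]
        exact div_pos (mul_pos (ih x) (hEpos t x))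
          (Finset.sum_pos (fun x' _ => mul_pos (ih x') (hEpos t x')) Finset.univ_nonempty)
  have hZpos : ∀ t, 0 < Zt t :=
    fun t => Finset.sum_pos (fun x _ => mul_pos (hppos t x) (hEpos t x)) Finset.univ_nonempty
  have hpsum : ∀ t, ∑ x, pseq t x = 1 := by
    intro t
    induction t with
    | zero =>
        simp only [h0]
        rw [Finset.sum_const, nsmul_eq_mul]
        field_simp
        simp only [Finset.card_univ]
    | succ t _ =>
        rw [Finset.sum_congr rfl fun x _ => hrec' t x, ← Finset.sum_div]
        exact div_self (hZpos t).ne'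
  -- log of the multiplier
  have hlogE : ∀ t x, Real.log (E t x) = klnat (W x) (Rp (pseq t)) / K := by
    intro t x
    rw [hEdef]
    rw [Real.log_rpow two_pos]
    rw [show KL (W x) (fun y => ∏ i, marg (pseq t) i (y i))
        = klnat (W x) (Rp (pseq t)) / Real.log 2 from KL_eq_klnat _ _]
    field_simp
  -- log of the update rule
  have hupd : ∀ t x, Real.log (pseq (t + 1) x)
      = Real.log (pseq t x) + klnat (W x) (Rp (pseq t)) / K - Real.log (Zt t) := by
    intro t x
    rw [hrec' t x, Real.log_div (mul_pos (hppos t x) (hEpos t x)).ne' (hZpos t).ne',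
      Real.log_mul (hppos t x).ne' (hEpos t x).ne', hlogE t x]
  -- natural-log mutual information
  set Inat : (X → ℝ) → ℝ := fun p => ∑ x, p x * klnat (W x) (Rp p) with hInatdef
  have hIeq : ∀ p : X → ℝ, I p = Inat p / Real.log 2 := by
    intro p
    rw [hI p, show KL (fun z : X × (∀ i, Y i) => p z.1 * W z.1 z.2)
        (fun z => p z.1 * ∏ i, marg p i (z.2 i))
        = klnat (fun z : X × (∀ i, Y i) => p z.1 * W z.1 z.2)
            (fun z => p z.1 * Rp p z.2) / Real.log 2 from KL_eq_klnat _ _]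
    congr 1
    unfold klnat
    rw [Fintype.sum_prod_type, hInatdef]
    refine Finset.sum_congr rfl fun x _ => ?_
    by_cases h : p x = 0
    · simp [h]
    · have he : ∀ y, (fun z : X × (∀ i, Y i) => p z.1 * W z.1 z.2) (x, y) *
          Real.log ((fun z : X × (∀ i, Y i) => p z.1 * W z.1 z.2) (x, y) /
            (fun z : X × (∀ i, Y i) => p z.1 * Rp p z.2) (x, y))
          = p x * (W x y * Real.log (W x y / Rp p y)) := by
        intro y
        simp only
        rw [mul_div_mul_left _ _ h]
        ring
      rw [Finset.sum_congr rfl fun y _ => he y, ← Finset.mul_sum]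
      rfl
  -- key decomposition identity
  have hkey : ∀ (p b : X → ℝ), (∀ x, 0 ≤ p x) → (∀ x, 0 < b x) →
      ∑ x, p x * klnat (W x) (Rp b)
        = Inat p + ∑ i, klnat (marg p i) (marg b i) := by
    intro p b hpn hbp
    have hxy : ∀ x, 0 < p x → ∀ y,
        W x y * Real.log (W x y / Rp b y)
          = W x y * Real.log (W x y / Rp p y)
            + ∑ i, W x y * Real.log (marg p i (y i) / marg b i (y i)) := by
      intro x hx y
      rcases ((hW x).1 y).eq_or_lt with h | h
      · simp [← h]
      · have h1 : ∀ i, 0 < marg p i (y i) := hmargpos p hpn x y hx h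
        have h2 : ∀ i, 0 < marg b i (y i) :=
          hmargpos b (fun x' => (hbp x').le) x y (hbp x) h
        have hRpp : 0 < Rp p y := Finset.prod_pos fun i _ => h1 i
        have hRpb : 0 < Rp b y := Finset.prod_pos fun i _ => h2 i
        have e1 : Real.log (Rp p y) = ∑ i, Real.log (marg p i (y i)) :=
          Real.log_prod (fun i _ => (h1 i).ne')
        have e2 : Real.log (Rp b y) = ∑ i, Real.log (marg b i (y i)) :=
          Real.log_prod (fun i _ => (h2 i).ne')
        have e4 : ∑ i, W x y * Real.log (marg p i (y i) / marg b i (y i))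
            = W x y * (Real.log (Rp p y) - Real.log (Rp b y)) := by
          rw [← Finset.mul_sum]
          congr 1
          rw [e1, e2, ← Finset.sum_sub_distrib]
          exact Finset.sum_congr rfl fun i _ =>
            Real.log_div (h1 i).ne' (h2 i).ne'
        rw [e4, Real.log_div h.ne' hRpb.ne', Real.log_div h.ne' hRpp.ne']
        ring
    have hmain : ∀ x, p x * klnat (W x) (Rp b)
        = p x * klnat (W x) (Rp p)
          + ∑ i, p x * ∑ y, W x y * Real.log (marg p i (y i) / marg b i (y i)) := by
      intro x
      rcases (hpn x).eq_or_lt with h | h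
      · simp [← h]
      · have h5 : klnat (W x) (Rp b)
            = klnat (W x) (Rp p)
              + ∑ i, ∑ y, W x y * Real.log (marg p i (y i) / marg b i (y i)) := by
          unfold klnat
          rw [Finset.sum_congr rfl fun y _ => hxy x h y, Finset.sum_add_distrib]
          congr 1
          exact Finset.sum_comm
        rw [h5, mul_add, Finset.mul_sum]
    rw [Finset.sum_congr rfl fun x _ => hmain x, Finset.sum_add_distrib]
    congr 1
    rw [Finset.sum_comm]
    refine Finset.sum_congr rfl fun i _ => ?_
    rw [← hmarg_g p i (fun yi => Real.log (marg p i yi / marg b i yi))]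
    rfl
  -- divergence-difference identity along the iteration
  have hDdiff : ∀ (p : X → ℝ), IsPMF p → ∀ t,
      klnat p (pseq t) - klnat p (pseq (t + 1))
        = (∑ x, p x * klnat (W x) (Rp (pseq t))) / K - Real.log (Zt t) := by
    intro p hp t
    have h1 : ∀ x, p x * Real.log (p x / pseq t x) - p x * Real.log (p x / pseq (t + 1) x)
        = p x * (klnat (W x) (Rp (pseq t)) / K) - p x * Real.log (Zt t) := by
      intro x
      rcases (hp.1 x).eq_or_lt with h | h
      · simp [← h]
      · rw [Real.log_div h.ne' (hppos t x).ne', Real.log_div h.ne' (hppos (t + 1) x).ne',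
          hupd t x]
        ring
    unfold klnat
    rw [← Finset.sum_sub_distrib, Finset.sum_congr rfl fun x _ => h1 x,
      Finset.sum_sub_distrib, ← Finset.sum_mul, hp.2, one_mul, Finset.sum_div]
    congr 1
    refine Finset.sum_congr rfl fun x _ => ?_
    show p x * (klnat (W x) (Rp (pseq t)) / (K:ℝ))
        = (p x * klnat (W x) (Rp (pseq t))) / (K:ℝ)
    exact (mul_div_assoc _ _ _).symm
  -- Jensen step
  have hJen : ∀ t, Inat (pseq t) ≤ (K:ℝ) * Real.log (Zt t) := by
    intro t
    have h1 : Inat (pseq t) = (K:ℝ) * ∑ x, pseq t x * Real.log (E t x) := by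
      rw [hInatdef, Finset.mul_sum]
      refine Finset.sum_congr rfl fun x _ => ?_
      rw [hlogE t x]
      field_simp
    rw [h1]
    exact mul_le_mul_of_nonneg_left
      (jensen_log (pseq t) (E t) (fun x => (hppos t x).le) (hpsum t) (fun x => hEpos t x))
      hKR.le
  -- the weighted divergence sum along the update
  have hSumF : ∀ t, ∑ x, pseq (t + 1) x * klnat (W x) (Rp (pseq t))
      = (K:ℝ) * klnat (pseq (t + 1)) (pseq t) + (K:ℝ) * Real.log (Zt t) := by
    intro t
    have h1 : ∀ x, pseq (t + 1) x * klnat (W x) (Rp (pseq t))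
        = (K:ℝ) * (pseq (t + 1) x * Real.log (pseq (t + 1) x / pseq t x))
          + (K:ℝ) * (pseq (t + 1) x * Real.log (Zt t)) := by
      intro x
      have e3 : klnat (W x) (Rp (pseq t)) / K
          = Real.log (pseq (t + 1) x) - Real.log (pseq t x) + Real.log (Zt t) := by
        linarith [hupd t x]
      rw [div_eq_iff hKR.ne'] at e3
      rw [e3, Real.log_div (hppos (t + 1) x).ne' (hppos t x).ne']
      ring
    rw [Finset.sum_congr rfl fun x _ => h1 x, Finset.sum_add_distrib,
      ← Finset.mul_sum, ← Finset.mul_sum, ← Finset.sum_mul, hpsum (t + 1), one_mul]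
    rfl
  -- lower bound on the next mutual information
  have hG : ∀ t, (K:ℝ) * Real.log (Zt t) ≤ Inat (pseq (t + 1)) := by
    intro t
    have hk := hkey (pseq (t + 1)) (pseq t) (fun x => (hppos _ x).le) (hppos t)
    have hdpi : ∀ i : Fin K,
        klnat (marg (pseq (t + 1)) i) (marg (pseq t) i) ≤ klnat (pseq (t + 1)) (pseq t) := by
      intro i
      have e1 : marg (pseq (t + 1)) i = fun yi => ∑ x, pseq (t + 1) x * Wi x i yi :=
        funext (hmarg' _ i)
      have e2 : marg (pseq t) i = fun yi => ∑ x, pseq t x * Wi x i yi :=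
        funext (hmarg' _ i)
      rw [e1, e2]
      exact klnat_dpi _ _ (fun x yi => Wi x i yi) (hppos _) (hppos t)
        (fun x yi => hWin x i yi) (fun x => hWis x i)
    have hdpisum : ∑ i, klnat (marg (pseq (t + 1)) i) (marg (pseq t) i)
        ≤ (K:ℝ) * klnat (pseq (t + 1)) (pseq t) := by
      calc ∑ i, klnat (marg (pseq (t + 1)) i) (marg (pseq t) i)
          ≤ ∑ _i : Fin K, klnat (pseq (t + 1)) (pseq t) :=
            Finset.sum_le_sum fun i _ => hdpi i
        _ = (K:ℝ) * klnat (pseq (t + 1)) (pseq t) := by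
            rw [Finset.sum_const, Finset.card_univ, Fintype.card_fin, nsmul_eq_mul]
    linarith [hSumF t, hk, hdpisum]
  -- nonnegativity of the marginal divergences for PMFs
  have hgibbsm : ∀ (p : X → ℝ), IsPMF p → ∀ t (i : Fin K),
      0 ≤ klnat (marg p i) (marg (pseq t) i) := by
    intro p hp t i
    refine klnat_nonneg (fun yi => hmargn p hp.1 i yi)
      (fun yi => hmargn _ (fun x => (hppos t x).le) i yi) ?_ ?_
    · intro yi h
      rw [hmarg'] at h ⊢
      have h2 := (Finset.sum_eq_zero_iff_of_nonneg
        (fun x _ => mul_nonneg (hppos t x).le (hWin x i yi))).1 h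
      refine Finset.sum_eq_zero fun x _ => ?_
      rcases mul_eq_zero.1 (h2 x (Finset.mem_univ x)) with h4 | h4
      · exact absurd h4 (hppos t x).ne'
      · rw [h4, mul_zero]
    · rw [hmargsum p hp.2 i, hmargsum _ (hpsum t) i]
  -- one-step improvement inequality
  have hstep : ∀ (p : X → ℝ), IsPMF p → ∀ t,
      Inat p - Inat (pseq (t + 1))
        ≤ (K:ℝ) * (klnat p (pseq t) - klnat p (pseq (t + 1))) := by
    intro p hp t
    have h2 := hkey p (pseq t) hp.1 (hppos t)
    have h3 : Inat p ≤ ∑ x, p x * klnat (W x) (Rp (pseq t)) := by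
      have := Finset.sum_nonneg (fun i (_ : i ∈ Finset.univ) => hgibbsm p hp t i)
      linarith [h2]
    have h5 : (K:ℝ) * (klnat p (pseq t) - klnat p (pseq (t + 1)))
        = ∑ x, p x * klnat (W x) (Rp (pseq t)) - (K:ℝ) * Real.log (Zt t) := by
      rw [hDdiff p hp t, mul_sub, mul_div_cancel₀ _ hKR.ne']
    linarith [hG t]
  -- monotonicity
  have hmono : Monotone fun t => Inat (pseq t) :=
    monotone_nat_of_le_succ fun t => (hJen t).trans (hG t)
  -- telescoping bound
  have htel : ∀ (p : X → ℝ), IsPMF p →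
      (n:ℝ) * (Inat p - Inat (pseq n)) ≤ (K:ℝ) * Real.log (Fintype.card X) := by
    intro p hp
    have hd0 : klnat p (pseq 0) ≤ Real.log (Fintype.card X) := by
      have hble : ∀ x, p x ≤ 1 := by
        intro x
        rw [← hp.2]
        exact Finset.single_le_sum (fun x' _ => hp.1 x') (Finset.mem_univ x)
      have hpt : ∀ x, p x * Real.log (p x / pseq 0 x)
          ≤ p x * Real.log (Fintype.card X) := by
        intro x
        rcases (hp.1 x).eq_or_lt with h | h
        · rw [← h]; simp
        · rw [h0 x]
          have e1 : p x / (1 / (Fintype.card X : ℝ)) = p x * Fintype.card X := by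
            field_simp
          rw [e1, Real.log_mul h.ne' hcard.ne']
          have h2 : Real.log (p x) ≤ 0 := Real.log_nonpos (hp.1 x) (hble x)
          nlinarith
      calc klnat p (pseq 0) ≤ ∑ x, p x * Real.log (Fintype.card X) :=
            Finset.sum_le_sum fun x _ => hpt x
        _ = Real.log (Fintype.card X) := by rw [← Finset.sum_mul, hp.2, one_mul]
    have hdn : 0 ≤ klnat p (pseq n) :=
      klnat_nonneg hp.1 (fun x => (hppos n x).le)
        (fun x hx => absurd hx (hppos n x).ne') (by rw [hp.2, hpsum n])
    have hsum1 : ∑ _t ∈ Finset.range n, (Inat p - Inat (pseq n))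
        ≤ ∑ t ∈ Finset.range n, (K:ℝ) * (klnat p (pseq t) - klnat p (pseq (t + 1))) := by
      refine Finset.sum_le_sum fun t ht => ?_
      have h1 := hstep p hp t
      have h2 : Inat (pseq (t + 1)) ≤ Inat (pseq n) :=
        hmono (Nat.succ_le_of_lt (Finset.mem_range.1 ht))
      linarith
    have hsum2 : ∑ t ∈ Finset.range n, (K:ℝ) * (klnat p (pseq t) - klnat p (pseq (t + 1)))
        = (K:ℝ) * (klnat p (pseq 0) - klnat p (pseq n)) := by
      rw [← Finset.mul_sum, Finset.sum_range_sub' (fun t => klnat p (pseq t))]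
    have hsum0 : ∑ _t ∈ Finset.range n, (Inat p - Inat (pseq n))
        = (n:ℝ) * (Inat p - Inat (pseq n)) := by
      rw [Finset.sum_const, Finset.card_range, nsmul_eq_mul]
    nlinarith [hsum1, hsum2, hsum0, hd0, hdn, hKR.le]
  -- conclude in base 2
  set B := (K:ℝ) * Real.logb 2 (Fintype.card X) / n with hB
  have hBval : B = (K:ℝ) * Real.log (Fintype.card X) / ((n:ℝ) * Real.log 2) := by
    rw [hB, Real.logb]
    ring
  have hbound : ∀ (p : X → ℝ), IsPMF p → I p ≤ I (pseq n) + B := by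
    intro p hp
    have h1 := htel p hp
    have h2' : Inat p ≤ Inat (pseq n) + (K:ℝ) * Real.log (Fintype.card X) / n := by
      rw [← sub_le_iff_le_add']
      rw [le_div_iff₀ hnR]
      linarith
    calc I p = Inat p / Real.log 2 := hIeq p
      _ ≤ (Inat (pseq n) + (K:ℝ) * Real.log (Fintype.card X) / n) / Real.log 2 := by
          gcongr
      _ = I (pseq n) + B := by
          rw [hIeq (pseq n), hBval]
          field_simp
  have hmem : I (pseq n) ∈ {c : ℝ | ∃ p : X → ℝ, IsPMF p ∧ c = I p} :=
    ⟨pseq n, ⟨fun x => (hppos n x).le, hpsum n⟩, rfl⟩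
  have hub : ∀ c ∈ {c : ℝ | ∃ p : X → ℝ, IsPMF p ∧ c = I p}, c ≤ I (pseq n) + B := by
    rintro c ⟨p, hp, rfl⟩
    exact hbound p hp
  have h1 : Ctilde ≤ I (pseq n) + B := by
    rw [hC]
    exact csSup_le ⟨_, hmem⟩ hub
  have h2 : I (pseq n) ≤ Ctilde := by
    rw [hC]
    exact le_csSup ⟨I (pseq n) + B, fun c hc => hub c hc⟩ hmem
  have hBnn : 0 ≤ B := by
    rw [hB]
    have hlb : 0 ≤ Real.logb 2 (Fintype.card X) :=
      Real.logb_nonneg one_lt_two (by exact_mod_cast Fintype.card_pos)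
    positivity
  rw [abs_of_nonneg (by linarith)]
  linarith
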